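/- arXiv:2204.09960 — 4 statements merged into one kernel-verified Lean document; each statement's English description precedes it below -/
import Mathlib

section
/- For all atomic propositions a, b ∈ P, the PPLTL formula O(a ∧ H(a ∨ ¬b)) ∨ H(¬b) is equivalent to the LTLf formula (¬b U a) ∨ G(¬b): for every finite nonempty trace τ over P, τ ⊨ O(a ∧ H(a ∨ ¬b)) ∨ H(¬b) if and only if τ ⊨ (¬b U a) ∨ G(¬b). -/
inductive PPLTL (P : Type) : Type
  | atom : P → PPLTL P
  | neg : PPLTL P → PPLTL P
  | conj : PPLTL P → PPLTL P → PPLTL P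
  | yesterday : PPLTL P → PPLTL P
  | since : PPLTL P → PPLTL P → PPLTL P

namespace PPLTL

variable {P : Type}

/-- Satisfaction of a pure-past LTL formula on the trace `τ` at instant `i`
(for a trace `s₀ ⋯ sₙ`, satisfaction at `i ≤ n` only depends on `s₀, …, sᵢ`). -/
def Sat (τ : ℕ → Set P) : PPLTL P → ℕ → Prop
  | atom p, i => p ∈ τ i
  | neg φ, i => ¬ Sat τ φ i
  | conj φ ψ, i => Sat τ φ i ∧ Sat τ ψ i
  | yesterday φ, i => 1 ≤ i ∧ Sat τ φ (i - 1)
  | since φ ψ, i => ∃ k, k ≤ i ∧ Sat τ ψ k ∧ ∀ j, k < j → j ≤ i → Sat τ φ j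

/-- Disjunction: `φ ∨ ψ ≡ ¬(¬φ ∧ ¬ψ)`. -/
def por (φ ψ : PPLTL P) : PPLTL P := neg (conj (neg φ) (neg ψ))

/-- Implication: `φ → ψ ≡ ¬φ ∨ ψ`. -/
def pimp (φ ψ : PPLTL P) : PPLTL P := por (neg φ) ψ

/-- `true ≡ p ∨ ¬p`. -/
def ptrue (p : P) : PPLTL P := por (atom p) (neg (atom p))

/-- Once: `O φ ≡ true S φ`. -/
def ponce (p : P) (φ : PPLTL P) : PPLTL P := since (ptrue p) φ

/-- Historically: `H φ ≡ ¬O¬φ`. -/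
def phist (p : P) (φ : PPLTL P) : PPLTL P := neg (ponce p (neg φ))

/-- Weak yesterday: `WY φ ≡ ¬Y¬φ`. -/
def pwy (φ : PPLTL P) : PPLTL P := neg (yesterday (neg φ))

/-- Start: `start ≡ ¬Y true`. -/
def pstart (p : P) : PPLTL P := neg (yesterday (ptrue p))

end PPLTL

inductive LTLf (P : Type) : Type
  | atom : P → LTLf P
  | neg : LTLf P → LTLf P
  | conj : LTLf P → LTLf P → LTLf P
  | next : LTLf P → LTLf P
  | until_ : LTLf P → LTLf P → LTLf P

namespace LTLf

variable {P : Type}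

/-- Satisfaction of an LTLf formula at instant `i` on the finite trace
`s₀ ⋯ sₙ` given by `τ` and the last index `n`. -/
def Sat (τ : ℕ → Set P) (n : ℕ) : LTLf P → ℕ → Prop
  | atom p, i => p ∈ τ i
  | neg ψ, i => ¬ Sat τ n ψ i
  | conj ψ₁ ψ₂, i => Sat τ n ψ₁ i ∧ Sat τ n ψ₂ i
  | next ψ, i => i < n ∧ Sat τ n ψ (i + 1)
  | until_ ψ₁ ψ₂, i =>
      ∃ k, i ≤ k ∧ k ≤ n ∧ Sat τ n ψ₂ k ∧ ∀ j, i ≤ j → j < k → Sat τ n ψ₁ j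

/-- Disjunction: `ψ₁ ∨ ψ₂ ≡ ¬(¬ψ₁ ∧ ¬ψ₂)`. -/
def lor (ψ₁ ψ₂ : LTLf P) : LTLf P := neg (conj (neg ψ₁) (neg ψ₂))

/-- Implication: `ψ₁ → ψ₂ ≡ ¬ψ₁ ∨ ψ₂`. -/
def limp (ψ₁ ψ₂ : LTLf P) : LTLf P := lor (neg ψ₁) ψ₂

/-- Biconditional. -/
def liff (ψ₁ ψ₂ : LTLf P) : LTLf P := conj (limp ψ₁ ψ₂) (limp ψ₂ ψ₁)

/-- `true ≡ p ∨ ¬p`. -/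
def ltrue (p : P) : LTLf P := lor (atom p) (neg (atom p))

/-- Eventually: `F ψ ≡ true U ψ`. -/
def ev (p : P) (ψ : LTLf P) : LTLf P := until_ (ltrue p) ψ

/-- Always: `G ψ ≡ ¬F¬ψ`. -/
def alw (p : P) (ψ : LTLf P) : LTLf P := neg (ev p (neg ψ))

/-- Weak next: `WX ψ ≡ ¬X¬ψ`. -/
def wnext (ψ : LTLf P) : LTLf P := neg (next (neg ψ))

/-- Release: `ψ₁ R ψ₂ ≡ ¬(¬ψ₁ U ¬ψ₂)`. -/
def release (ψ₁ ψ₂ : LTLf P) : LTLf P := neg (until_ (neg ψ₁) (neg ψ₂))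

/-- End of the trace: `end ≡ ¬X true`. -/
def lend (p : P) : LTLf P := neg (next (ltrue p))

end LTLf

open PPLTL LTLf in
/-- The PPLTL formula `O(a ∧ H(a ∨ ¬b)) ∨ H(¬b)` is equivalent
to the LTLf formula `(¬b U a) ∨ G(¬b)`. -/
theorem precedence_equiv {P : Type} (a b : P) (τ : ℕ → Set P) (n : ℕ) :
    PPLTL.Sat τ
        (por (ponce a (.conj (.atom a) (phist a (por (.atom a) (.neg (.atom b))))))
          (phist a (.neg (.atom b)))) n ↔
      LTLf.Sat τ n (lor (.until_ (.neg (.atom b)) (.atom a)) (alw a (.neg (.atom b)))) 0 := by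
  simp only [PPLTL.Sat, LTLf.Sat, por, ponce, phist, ptrue, lor, alw, ev, ltrue]
  simp only [not_and_self_iff, and_false, false_and, exists_false, imp_false, not_exists, not_and, not_forall, not_not, ← imp_iff_not_or]
  suffices H : (∀ k ≤ n, a ∈ τ k → ∃ j, ∃ (_ : j ≤ k) (_ : a ∉ τ j), b ∈ τ j) ↔
      (∀ (k : ℕ), 0 ≤ k → k ≤ n → a ∈ τ k → ∃ j, ∃ (_ : 0 ≤ j) (_ : j < k), b ∈ τ j) by
    constructor
    · intro h h2 k _ hk hb
      exact h (H.2 h2) k hk hb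
    · intro h h1 k hk hb
      exact h (H.1 h1) k (Nat.zero_le _) hk hb
  constructor
  · intro h k _ hk ha
    obtain ⟨j, hj, hna, hb⟩ := h k hk ha
    exact ⟨j, Nat.zero_le _, lt_of_le_of_ne hj (by rintro rfl; exact hna ha), hb⟩
  · intro h k
    induction k using Nat.strong_induction_on with
    | _ k ih =>
      intro hk ha
      obtain ⟨j, -, hjk, hb⟩ := h k (Nat.zero_le _) hk ha
      by_cases haj : a ∈ τ j
      · obtain ⟨j', hj', hna, hb'⟩ := ih j hjk (le_trans hjk.le hk) haj
        exact ⟨j', hj'.trans hjk.le, hna, hb'⟩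
      · exact ⟨j, hjk.le, haj, hb⟩
end

section
/- For all atomic propositions a, b ∈ P, the PPLTL formula H(O(a ∧ H(a ∨ ¬b)) → Y b) is equivalent to the LTLf formula b R ¬a: for every finite nonempty trace τ over P, τ ⊨ H(O(a ∧ H(a ∨ ¬b)) → Y b) if and only if τ ⊨ b R ¬a. -/
open PPLTL LTLf in
/-- The PPLTL formula `H(O(a ∧ H(a ∨ ¬b)) → Y b)` is
equivalent to the LTLf formula `b R ¬a`. -/
theorem sometime_before_equiv {P : Type} (a b : P) (τ : ℕ → Set P) (n : ℕ) :
    PPLTL.Sat τ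
        (phist a (pimp
          (ponce a (.conj (.atom a) (phist a (por (.atom a) (.neg (.atom b))))))
          (.yesterday (.atom b)))) n ↔
      LTLf.Sat τ n (release (.atom b) (.neg (.atom a))) 0 := by
  simp only [PPLTL.Sat, phist, pimp, por, ponce, ptrue, LTLf.Sat, release,
    not_and, not_exists, not_forall, not_not, not_or, exists_prop, and_not_self_iff,
    not_and_self_iff, imp_false, and_imp, exists_false, le_refl, zero_le, true_and,
    true_implies, and_false, false_and, not_false_iff, and_true, implies_true]
  constructor
  · intro h k hk hak
    by_contra hb
    push_neg at hb
    have h2 := h k hk ⟨k, le_refl k, hak, ?_⟩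
    · exact hb (k - 1) (Nat.sub_lt h2.1 one_pos) h2.2
    · intro j hj haj hbj
      rcases lt_or_eq_of_le hj with h' | h'
      · exact hb j h' hbj
      · exact haj (h' ▸ hak)
  · intro h
    have key : ∀ k, k ≤ n → a ∈ τ k → (∀ j, j ≤ k → a ∉ τ j → b ∉ τ j) → False := by
      intro k
      induction k using Nat.strong_induction_on with
      | _ k ih =>
        intro hkn hak hcond
        obtain ⟨j, hj, hbj⟩ := h k hkn hak
        have haj : a ∈ τ j := by
          by_contra hna
          exact hcond j (le_of_lt hj) hna hbj
        exact ih j hj (le_trans (le_of_lt hj) hkn) haj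
          (fun j' hj' => hcond j' (le_trans hj' (le_of_lt hj)))
    intro i hi hex
    obtain ⟨k, hki, hak, hcond⟩ := hex
    exact (key k (le_trans hki hi) hak hcond).elim
end

section
/- For every propositional formula θ over P (a formula built from atoms in P using only ¬ and ∧), the PPLTL formula H(θ → WY(H(¬θ))) is equivalent to the LTLf formula G(θ → WX(G(¬θ))): for every finite nonempty trace τ over P, τ ⊨ H(θ → WY(H(¬θ))) if and only if τ ⊨ G(θ → WX(G(¬θ))). -/
/-- Propositional formulas over `P`, built from atoms using only ¬ and ∧. -/
inductive PropForm (P : Type) : Type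
  | atom : P → PropForm P
  | neg : PropForm P → PropForm P
  | conj : PropForm P → PropForm P → PropForm P

namespace PropForm

variable {P : Type}

/-- Some atom occurring in a propositional formula (used to express the
abbreviation `true ≡ p ∨ ¬p`). -/
def someAtom : PropForm P → P
  | atom p => p
  | neg θ => someAtom θ
  | conj θ _ => someAtom θ

/-- A propositional formula read as a PPLTL formula. -/
def toPPLTL : PropForm P → PPLTL P
  | atom p => PPLTL.atom p
  | neg θ => PPLTL.neg θ.toPPLTL
  | conj θ₁ θ₂ => PPLTL.conj θ₁.toPPLTL θ₂.toPPLTL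

/-- A propositional formula read as an LTLf formula. -/
def toLTLf : PropForm P → LTLf P
  | atom p => LTLf.atom p
  | neg θ => LTLf.neg θ.toLTLf
  | conj θ₁ θ₂ => LTLf.conj θ₁.toLTLf θ₂.toLTLf

end PropForm

section Aux

variable {P : Type}

lemma propSat_iff (θ : PropForm P) (τ : ℕ → Set P) (n i : ℕ) :
    PPLTL.Sat τ θ.toPPLTL i ↔ LTLf.Sat τ n θ.toLTLf i := by
  induction θ with
  | atom p => simp [PropForm.toPPLTL, PropForm.toLTLf, PPLTL.Sat, LTLf.Sat]
  | neg θ ih => simp [PropForm.toPPLTL, PropForm.toLTLf, PPLTL.Sat, LTLf.Sat, ih]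
  | conj θ₁ θ₂ ih₁ ih₂ =>
      simp [PropForm.toPPLTL, PropForm.toLTLf, PPLTL.Sat, LTLf.Sat, ih₁, ih₂]

lemma ptrue_sat (p : P) (τ : ℕ → Set P) (i : ℕ) : PPLTL.Sat τ (PPLTL.ptrue p) i := by
  simp [PPLTL.ptrue, PPLTL.por, PPLTL.Sat]

lemma ltrue_sat (p : P) (τ : ℕ → Set P) (n i : ℕ) : LTLf.Sat τ n (LTLf.ltrue p) i := by
  simp [LTLf.ltrue, LTLf.lor, LTLf.Sat]

lemma pimp_iff (φ ψ : PPLTL P) (τ : ℕ → Set P) (i : ℕ) :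
    PPLTL.Sat τ (PPLTL.pimp φ ψ) i ↔ (PPLTL.Sat τ φ i → PPLTL.Sat τ ψ i) := by
  simp [PPLTL.pimp, PPLTL.por, PPLTL.Sat]

lemma pwy_iff (φ : PPLTL P) (τ : ℕ → Set P) (i : ℕ) :
    PPLTL.Sat τ (PPLTL.pwy φ) i ↔ (1 ≤ i → PPLTL.Sat τ φ (i - 1)) := by
  simp [PPLTL.pwy, PPLTL.Sat]

lemma limp_iff (φ ψ : LTLf P) (τ : ℕ → Set P) (n i : ℕ) :
    LTLf.Sat τ n (LTLf.limp φ ψ) i ↔ (LTLf.Sat τ n φ i → LTLf.Sat τ n ψ i) := by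
  simp [LTLf.limp, LTLf.lor, LTLf.Sat]

lemma wnext_iff (φ : LTLf P) (τ : ℕ → Set P) (n i : ℕ) :
    LTLf.Sat τ n (LTLf.wnext φ) i ↔ (i < n → LTLf.Sat τ n φ (i + 1)) := by
  simp [LTLf.wnext, LTLf.Sat]

lemma phist_iff (p : P) (φ : PPLTL P) (τ : ℕ → Set P) (i : ℕ) :
    PPLTL.Sat τ (PPLTL.phist p φ) i ↔ ∀ k, k ≤ i → PPLTL.Sat τ φ k := by
  simp only [PPLTL.phist, PPLTL.ponce, PPLTL.Sat]
  constructor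
  · intro h k hk
    by_contra hφ
    exact h ⟨k, hk, hφ, fun j _ _ => ptrue_sat p τ j⟩
  · rintro h ⟨k, hk, hφ, -⟩
    exact hφ (h k hk)

lemma alw_iff (p : P) (ψ : LTLf P) (τ : ℕ → Set P) (n i : ℕ) :
    LTLf.Sat τ n (LTLf.alw p ψ) i ↔ ∀ k, i ≤ k → k ≤ n → LTLf.Sat τ n ψ k := by
  simp only [LTLf.alw, LTLf.ev, LTLf.Sat]
  constructor
  · intro h k hik hkn
    by_contra hψ
    exact h ⟨k, hik, hkn, hψ, fun j _ _ => ltrue_sat p τ n j⟩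
  · rintro h ⟨k, hik, hkn, hψ, -⟩
    exact hψ (h k hik hkn)

end Aux

open PPLTL LTLf in
/-- For every propositional formula θ, the PPLTL formula
`H(θ → WY(H(¬θ)))` is equivalent to the LTLf formula `G(θ → WX(G(¬θ)))`. -/
theorem at_most_once_equiv {P : Type} (θ : PropForm P) (τ : ℕ → Set P) (n : ℕ) :
    PPLTL.Sat τ
        (phist θ.someAtom
          (pimp θ.toPPLTL (pwy (phist θ.someAtom (.neg θ.toPPLTL))))) n ↔
      LTLf.Sat τ n
        (alw θ.someAtom
          (limp θ.toLTLf (wnext (alw θ.someAtom (.neg θ.toLTLf))))) 0 := by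
  set Q : ℕ → Prop := fun i => PPLTL.Sat τ θ.toPPLTL i with hQ
  have hQ' : ∀ i, LTLf.Sat τ n θ.toLTLf i ↔ Q i := fun i => (propSat_iff θ τ n i).symm
  rw [phist_iff, alw_iff]
  have hL : (∀ k, k ≤ n →
      PPLTL.Sat τ (pimp θ.toPPLTL (pwy (phist θ.someAtom (.neg θ.toPPLTL)))) k) ↔
      ∀ i, i ≤ n → Q i → ∀ k, k < i → ¬ Q k := by
    apply forall_congr'; intro i
    apply imp_congr_right; intro _
    rw [pimp_iff, pwy_iff]
    constructor
    · intro h hq k hki hqk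
      have h1 : 1 ≤ i := by omega
      have := (phist_iff _ _ τ (i - 1)).mp (h hq h1) k (by omega)
      exact this hqk
    · intro h hq h1
      rw [phist_iff]
      intro k hk
      exact h hq k (by omega)
  have hR : (∀ k, 0 ≤ k → k ≤ n →
      LTLf.Sat τ n (limp θ.toLTLf (wnext (alw θ.someAtom (.neg θ.toLTLf)))) k) ↔
      ∀ i, i ≤ n → Q i → ∀ k, i < k → k ≤ n → ¬ Q k := by
    constructor
    · intro h i hin hq k hik hkn hqk
      have := h i (Nat.zero_le i) hin
      rw [limp_iff, wnext_iff] at this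
      have h2 := (alw_iff _ _ τ n (i+1)).mp
        (this ((hQ' i).mpr hq) (lt_of_lt_of_le hik hkn)) k (by omega) hkn
      exact h2 ((hQ' k).mpr hqk)
    · intro h i _ hin
      rw [limp_iff, wnext_iff]
      intro hq hin'
      rw [alw_iff]
      intro k hik hkn hqk
      exact h i hin ((hQ' i).mp hq) k (by omega) hkn ((hQ' k).mp hqk)
  rw [hL, hR]
  constructor
  · intro h i hin hq k hik hkn hqk
    exact h k hkn hqk i hik hq
  · intro h i hin hq k hki hqk
    exact h k (le_trans (le_of_lt hki) hin) hqk i hki hin hq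
end

section
/- For every natural number n ≥ 0 and every propositional formula θ over P (built from atoms in P using only ¬ and ∧), the PPLTL formula ⋁_{0 ≤ i ≤ n+1} (θ ∧ Yⁱ(start)) is equivalent to the LTLf formula ⋁_{0 ≤ i ≤ n+1} Xⁱ(θ ∧ end), where Y⁰φ = φ, Y^{i+1}φ = Y(Yⁱφ), X⁰ψ = ψ, X^{i+1}ψ = X(Xⁱψ): for every finite nonempty trace τ over P, τ ⊨ ⋁_{0 ≤ i ≤ n+1} (θ ∧ Yⁱ(start)) if and only if τ ⊨ ⋁_{0 ≤ i ≤ n+1} Xⁱ(θ ∧ end). -/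
/-- Iterated yesterday: `Y⁰φ = φ`, `Y^{i+1}φ = Y(Yⁱφ)`. -/
def iterY {P : Type} : ℕ → PPLTL P → PPLTL P
  | 0, φ => φ
  | i + 1, φ => .yesterday (iterY i φ)

/-- Iterated next: `X⁰ψ = ψ`, `X^{i+1}ψ = X(Xⁱψ)`. -/
def iterX {P : Type} : ℕ → LTLf P → LTLf P
  | 0, ψ => ψ
  | i + 1, ψ => .next (iterX i ψ)

/-- The disjunction `⋁_{0 ≤ i ≤ k} f i` of PPLTL formulas. -/
def orUpToP {P : Type} (f : ℕ → PPLTL P) : ℕ → PPLTL P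
  | 0 => f 0
  | k + 1 => PPLTL.por (orUpToP f k) (f (k + 1))

/-- The disjunction `⋁_{0 ≤ i ≤ k} f i` of LTLf formulas. -/
def orUpToF {P : Type} (f : ℕ → LTLf P) : ℕ → LTLf P
  | 0 => f 0
  | k + 1 => LTLf.lor (orUpToF f k) (f (k + 1))

section Aux

variable {P : Type}

lemma sat_ptrue (τ : ℕ → Set P) (p : P) (i : ℕ) : PPLTL.Sat τ (PPLTL.ptrue p) i := by
  simp only [PPLTL.ptrue, PPLTL.por, PPLTL.Sat]
  tauto

lemma sat_pstart (τ : ℕ → Set P) (p : P) (i : ℕ) :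
    PPLTL.Sat τ (PPLTL.pstart p) i ↔ i = 0 := by
  constructor
  · intro h
    by_contra hi
    exact h ⟨by omega, fun ⟨h1, h2⟩ => h2 h1⟩
  · rintro rfl ⟨h, -⟩
    omega

lemma sat_iterY_pstart (τ : ℕ → Set P) (p : P) (i m : ℕ) :
    PPLTL.Sat τ (iterY i (PPLTL.pstart p)) m ↔ m = i := by
  induction i generalizing m with
  | zero => simpa [iterY] using sat_pstart τ p m
  | succ i ih =>
    simp only [iterY, PPLTL.Sat, ih]
    omega

lemma sat_ltrue (τ : ℕ → Set P) (m : ℕ) (p : P) (i : ℕ) :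
    LTLf.Sat τ m (LTLf.ltrue p) i := by
  simp only [LTLf.ltrue, LTLf.lor, LTLf.Sat]
  tauto

lemma sat_lend (τ : ℕ → Set P) (m : ℕ) (p : P) (i : ℕ) :
    LTLf.Sat τ m (LTLf.lend p) i ↔ m ≤ i := by
  constructor
  · intro h
    by_contra hi
    exact h ⟨by omega, fun ⟨h1, h2⟩ => h2 h1⟩
  · rintro h ⟨h1, -⟩
    omega

lemma sat_iterX_end (τ : ℕ → Set P) (m : ℕ) (θ : PropForm P) (p : P) (i j : ℕ) :
    LTLf.Sat τ m (iterX i (.conj θ.toLTLf (LTLf.lend p))) j ↔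
      (i = 0 ∧ m ≤ j ∧ LTLf.Sat τ m θ.toLTLf j) ∨
        (j + i = m ∧ LTLf.Sat τ m θ.toLTLf m) := by
  induction i generalizing j with
  | zero =>
    have h := sat_lend τ m p j
    show LTLf.Sat τ m θ.toLTLf j ∧ LTLf.Sat τ m (LTLf.lend p) j ↔ _
    rw [h]
    constructor
    · rintro ⟨h1, h2⟩; exact Or.inl ⟨rfl, h2, h1⟩
    · rintro (⟨-, h2, h1⟩ | ⟨h1, h2⟩)
      · exact ⟨h1, h2⟩
      · have hj : j = m := by omega
        subst hj
        exact ⟨h2, le_rfl⟩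
  | succ i ih =>
    simp only [iterX, LTLf.Sat, ih]
    constructor
    · rintro ⟨hj, (⟨hi0, hm, hθ⟩ | ⟨hm, hθ⟩)⟩
      · have : j + 1 = m := by omega
        exact Or.inr ⟨by omega, this ▸ hθ⟩
      · exact Or.inr ⟨by omega, hθ⟩
    · rintro (⟨hi0, -, -⟩ | ⟨hm, hθ⟩)
      · exact absurd hi0 (Nat.succ_ne_zero i)
      · exact ⟨by omega, Or.inr ⟨by omega, hθ⟩⟩

lemma sat_toPPLTL_iff (τ : ℕ → Set P) (m : ℕ) (θ : PropForm P) (i : ℕ) :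
    PPLTL.Sat τ θ.toPPLTL i ↔ LTLf.Sat τ m θ.toLTLf i := by
  induction θ generalizing i with
  | atom p => simp [PropForm.toPPLTL, PropForm.toLTLf, PPLTL.Sat, LTLf.Sat]
  | neg θ ih => simp [PropForm.toPPLTL, PropForm.toLTLf, PPLTL.Sat, LTLf.Sat, ih]
  | conj θ₁ θ₂ ih1 ih2 =>
      simp [PropForm.toPPLTL, PropForm.toLTLf, PPLTL.Sat, LTLf.Sat, ih1, ih2]

lemma sat_orUpToP (τ : ℕ → Set P) (f : ℕ → PPLTL P) (k m : ℕ) :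
    PPLTL.Sat τ (orUpToP f k) m ↔ ∃ i ≤ k, PPLTL.Sat τ (f i) m := by
  induction k with
  | zero => simp [orUpToP]
  | succ k ih =>
    simp only [orUpToP, PPLTL.por, PPLTL.Sat, ih]
    constructor
    · intro h
      rcases Classical.em (∃ i ≤ k, PPLTL.Sat τ (f i) m) with ⟨i, hi, hs⟩ | h1
      · exact ⟨i, by omega, hs⟩
      · rcases Classical.em (PPLTL.Sat τ (f (k + 1)) m) with h2 | h2
        · exact ⟨k + 1, le_refl _, h2⟩
        · exact absurd ⟨h1, h2⟩ h
    · rintro ⟨i, hi, hs⟩ ⟨h1, h2⟩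
      rcases Nat.lt_or_ge i (k + 1) with h | h
      · exact h1 ⟨i, by omega, hs⟩
      · have hik : i = k + 1 := by omega
        subst hik; exact h2 hs

lemma sat_orUpToF (τ : ℕ → Set P) (m : ℕ) (f : ℕ → LTLf P) (k j : ℕ) :
    LTLf.Sat τ m (orUpToF f k) j ↔ ∃ i ≤ k, LTLf.Sat τ m (f i) j := by
  induction k with
  | zero => simp [orUpToF]
  | succ k ih =>
    simp only [orUpToF, LTLf.lor, LTLf.Sat, ih]
    constructor
    · intro h
      rcases Classical.em (∃ i ≤ k, LTLf.Sat τ m (f i) j) with ⟨i, hi, hs⟩ | h1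
      · exact ⟨i, by omega, hs⟩
      · rcases Classical.em (LTLf.Sat τ m (f (k + 1)) j) with h2 | h2
        · exact ⟨k + 1, le_refl _, h2⟩
        · exact absurd ⟨h1, h2⟩ h
    · rintro ⟨i, hi, hs⟩ ⟨h1, h2⟩
      rcases Nat.lt_or_ge i (k + 1) with h | h
      · exact h1 ⟨i, by omega, hs⟩
      · have hik : i = k + 1 := by omega
        subst hik; exact h2 hs

end Aux

open PPLTL LTLf in
/-- For every `n ≥ 0` and propositional formula θ, the PPLTL
formula `⋁_{0 ≤ i ≤ n+1} (θ ∧ Yⁱ(start))` is equivalent to the LTLf formula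
`⋁_{0 ≤ i ≤ n+1} Xⁱ(θ ∧ end)`. -/
theorem hold_after_equiv {P : Type} (n : ℕ) (θ : PropForm P) (τ : ℕ → Set P) (m : ℕ) :
    PPLTL.Sat τ
        (orUpToP (fun i => .conj θ.toPPLTL (iterY i (pstart θ.someAtom))) (n + 1)) m ↔
      LTLf.Sat τ m
        (orUpToF (fun i => iterX i (.conj θ.toLTLf (lend θ.someAtom))) (n + 1)) 0 := by
  rw [sat_orUpToP, sat_orUpToF]
  constructor
  · rintro ⟨i, hi, hθ, hY⟩
    rw [sat_iterY_pstart] at hY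
    refine ⟨i, hi, ?_⟩
    rw [sat_iterX_end]
    exact Or.inr ⟨by omega, by rw [← sat_toPPLTL_iff]; simpa [hY] using hθ⟩
  · rintro ⟨i, hi, hX⟩
    rw [sat_iterX_end] at hX
    rcases hX with ⟨hi0, hm, hθ⟩ | ⟨hm, hθ⟩
    · have hm0 : m = 0 := by omega
      refine ⟨0, by omega, ?_, ?_⟩
      · rw [sat_toPPLTL_iff τ m]; simpa [hm0] using hθ
      · rw [sat_iterY_pstart]; omega
    · refine ⟨i, hi, ?_, ?_⟩
      · rw [sat_toPPLTL_iff τ m]; simpa using hθ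
      · rw [sat_iterY_pstart]; omega
end
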